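/- For integers n ≥ 3 and 2 ≤ k ≤ n and every T > 0, there exists a unique p ∈ ℝ such that ∫_{−∞}^{0} {1 + e^{−2η − 2p}[1 − e^{nη}]^{1/k}}^{−1/2} dη = T. -/

import Mathlib

open Real MeasureTheory

section Stmt5Aux
open Filter Set Topology ENNReal


noncomputable def s5f (n k : ℕ) (p η : ℝ) : ℝ :=
  (1 + Real.exp (-2 * η - 2 * p) * (1 - Real.exp ((n : ℝ) * η)) ^ ((1 : ℝ) / k))
    ^ (-(1 : ℝ) / 2)

noncomputable def s5c (n k : ℕ) : ℝ :=
  ((1 - Real.exp (-(n : ℝ))) ^ ((1 : ℝ) / k)) ^ (-(1 : ℝ) / 2)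

noncomputable def s5C (n k : ℕ) (p : ℝ) : ℝ :=
  max (Real.exp 1) (Real.exp (p + 1) * s5c n k)

lemma s5_C_pos (n k : ℕ) (p : ℝ) : 0 < s5C n k p :=
  lt_max_of_lt_left (Real.exp_pos 1)

lemma s5_meas (n k : ℕ) (p : ℝ) : Measurable (s5f n k p) := by
  unfold s5f; fun_prop

lemma s5_dom_int (n k : ℕ) (p : ℝ) :
    IntegrableOn (fun η => min 1 (s5C n k p * Real.exp η)) (Iio (0:ℝ)) := by
  have h1 : IntegrableOn (fun η => s5C n k p * Real.exp η) (Iio (0:ℝ)) :=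
    ((integrableOn_exp_Iic 0).mono_set Iio_subset_Iic_self).const_mul _
  refine Integrable.mono h1 ?_ (ae_of_all _ fun η => ?_)
  · exact (measurable_const.min (measurable_exp.const_mul _)).aestronglyMeasurable
  · have hC := s5_C_pos n k p
    have h2 : (0:ℝ) < s5C n k p * Real.exp η := by positivity
    rw [Real.norm_eq_abs, Real.norm_eq_abs, abs_of_pos h2,
      abs_of_pos (lt_min one_pos h2)]
    exact min_le_right _ _

section
variable (n k : ℕ) (hn : 0 < n)
include hn

lemma s5_sub_pos {η : ℝ} (hη : η < 0) : 0 < 1 - Real.exp ((n : ℝ) * η) := by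
  have : (n : ℝ) * η < 0 := mul_neg_of_pos_of_neg (by exact_mod_cast hn) hη
  have := Real.exp_lt_one_iff.mpr this
  linarith

lemma s5_g_pos {η : ℝ} (hη : η < 0) :
    0 < (1 - Real.exp ((n : ℝ) * η)) ^ ((1 : ℝ) / k) :=
  Real.rpow_pos_of_pos (s5_sub_pos n hn hη) _

lemma s5_g_le_one {η : ℝ} (hη : η < 0) :
    (1 - Real.exp ((n : ℝ) * η)) ^ ((1 : ℝ) / k) ≤ 1 := by
  refine Real.rpow_le_one (s5_sub_pos n hn hη).le ?_ (by positivity)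
  have := Real.exp_pos ((n : ℝ) * η)
  linarith

lemma s5_base_ge_one {p η : ℝ} (hη : η < 0) :
    1 ≤ 1 + Real.exp (-2 * η - 2 * p) * (1 - Real.exp ((n : ℝ) * η)) ^ ((1 : ℝ) / k) := by
  have h1 := s5_g_pos n k hn hη
  have h2 := Real.exp_pos (-2 * η - 2 * p)
  nlinarith

lemma s5_f_pos {p η : ℝ} (hη : η < 0) : 0 < s5f n k p η :=
  Real.rpow_pos_of_pos (lt_of_lt_of_le one_pos (s5_base_ge_one n k hn hη)) _

lemma s5_f_le_one {p η : ℝ} (hη : η < 0) : s5f n k p η ≤ 1 :=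
  Real.rpow_le_one_of_one_le_of_nonpos (s5_base_ge_one n k hn hη) (by norm_num)

lemma s5_f_mono {p q η : ℝ} (hpq : p ≤ q) (hη : η < 0) : s5f n k p η ≤ s5f n k q η := by
  unfold s5f
  have h1 := s5_g_pos n k hn hη
  have h2 : Real.exp (-2 * η - 2 * q) ≤ Real.exp (-2 * η - 2 * p) :=
    Real.exp_le_exp.mpr (by linarith)
  refine Real.rpow_le_rpow_of_nonpos (lt_of_lt_of_le one_pos (s5_base_ge_one n k hn hη))
    ?_ (by norm_num)
  nlinarith

lemma s5_f_strict {p q η : ℝ} (hpq : p < q) (hη : η < 0) : s5f n k p η < s5f n k q η := by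
  unfold s5f
  have h1 := s5_g_pos n k hn hη
  have h2 : Real.exp (-2 * η - 2 * q) < Real.exp (-2 * η - 2 * p) :=
    Real.exp_lt_exp.mpr (by linarith)
  refine Real.rpow_lt_rpow_of_neg (lt_of_lt_of_le one_pos (s5_base_ge_one n k hn hη))
    ?_ (by norm_num)
  nlinarith

lemma s5_c_pos : 0 < s5c n k := by
  have h : (0:ℝ) < 1 - Real.exp (-(n : ℝ)) := by
    have : -(n:ℝ) < 0 := by
      have : (0:ℝ) < n := by exact_mod_cast hn
      linarith
    have := Real.exp_lt_one_iff.mpr this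
    linarith
  exact Real.rpow_pos_of_pos (Real.rpow_pos_of_pos h _) _

lemma s5_tail {η : ℝ} (hη : η ≤ -1) (p : ℝ) :
    s5f n k p η ≤ Real.exp (η + p) * s5c n k := by
  have hη0 : η < 0 := lt_of_le_of_lt hη (by norm_num)
  have hsub : (0:ℝ) < 1 - Real.exp (-(n : ℝ)) := by
    have : -(n:ℝ) < 0 := by
      have : (0:ℝ) < n := by exact_mod_cast hn
      linarith
    have := Real.exp_lt_one_iff.mpr this
    linarith
  have hcg : (1 - Real.exp (-(n : ℝ))) ^ ((1 : ℝ) / k)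
      ≤ (1 - Real.exp ((n : ℝ) * η)) ^ ((1 : ℝ) / k) := by
    refine Real.rpow_le_rpow hsub.le ?_ (by positivity)
    have h1 : (n:ℝ) * η ≤ -(n:ℝ) := by
      have h2 : (n:ℝ) * η ≤ (n:ℝ) * (-1) :=
        mul_le_mul_of_nonneg_left hη (by positivity)
      linarith
    have := Real.exp_le_exp.mpr h1
    linarith
  set c := (1 - Real.exp (-(n : ℝ))) ^ ((1 : ℝ) / k) with hc
  have hcpos : 0 < c := Real.rpow_pos_of_pos hsub _
  have hstep1 : s5f n k p η ≤ (Real.exp (-2 * η - 2 * p) * c) ^ (-(1:ℝ)/2) := by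
    unfold s5f
    refine Real.rpow_le_rpow_of_nonpos (by positivity) ?_ (by norm_num)
    have h1 : Real.exp (-2 * η - 2 * p) * c
        ≤ Real.exp (-2 * η - 2 * p) * (1 - Real.exp ((n : ℝ) * η)) ^ ((1 : ℝ) / k) :=
      mul_le_mul_of_nonneg_left hcg (Real.exp_pos _).le
    linarith
  have hstep2 : (Real.exp (-2 * η - 2 * p) * c) ^ (-(1:ℝ)/2)
      = Real.exp (η + p) * s5c n k := by
    rw [Real.mul_rpow (Real.exp_pos _).le hcpos.le, ← Real.exp_mul]
    rw [s5c, ← hc]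
    ring_nf
  rw [← hstep2]; exact hstep1

lemma s5_dom {p q η : ℝ} (hq : q ≤ p) (hη : η < 0) :
    s5f n k q η ≤ min 1 (s5C n k p * Real.exp η) := by
  refine le_trans (s5_f_mono n k hn hq hη) (le_min (s5_f_le_one n k hn hη) ?_)
  rcases le_or_gt η (-1) with h | h
  · refine le_trans (s5_tail n k hn h p) ?_
    have h1 : Real.exp (η + p) * s5c n k
        = (Real.exp p * s5c n k) * Real.exp η := by
      rw [Real.exp_add]; ring
    rw [h1]
    refine mul_le_mul_of_nonneg_right ?_ (Real.exp_pos η).le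
    refine le_trans ?_ (le_max_right _ _)
    have := s5_c_pos n k hn
    have h2 : Real.exp p ≤ Real.exp (p + 1) := Real.exp_le_exp.mpr (by linarith)
    nlinarith
  · refine le_trans (s5_f_le_one n k hn hη) ?_
    have h1 : (1:ℝ) ≤ Real.exp 1 * Real.exp η := by
      rw [← Real.exp_add]
      have : (0:ℝ) ≤ 1 + η := by linarith
      calc (1:ℝ) = Real.exp 0 := Real.exp_zero.symm
        _ ≤ Real.exp (1 + η) := Real.exp_le_exp.mpr this
    refine le_trans h1 ?_
    exact mul_le_mul_of_nonneg_right (le_max_left _ _) (Real.exp_pos η).le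

lemma s5_int (p : ℝ) : IntegrableOn (s5f n k p) (Iio (0:ℝ)) := by
  refine Integrable.mono (s5_dom_int n k p) (s5_meas n k p).aestronglyMeasurable ?_
  refine (ae_restrict_iff' measurableSet_Iio).mpr (ae_of_all _ fun η hη => ?_)
  rw [Real.norm_eq_abs, abs_of_pos (s5_f_pos n k hn hη)]
  exact le_trans (s5_dom n k hn le_rfl hη) (le_abs_self _)

end

noncomputable def s5F (n k : ℕ) (p : ℝ) : ℝ := ∫ η in Iio (0:ℝ), s5f n k p η

section
variable (n k : ℕ) (hn : 0 < n)
include hn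

lemma s5_F_strictMono : StrictMono (s5F n k) := by
  intro p q hpq
  have hp := s5_int n k hn p
  have hq := s5_int n k hn q
  have hdiff : 0 < ∫ η in Iio (0:ℝ), (s5f n k q η - s5f n k p η) := by
    rw [setIntegral_pos_iff_support_of_nonneg_ae
      ((ae_restrict_iff' measurableSet_Iio).mpr (ae_of_all _ fun η hη =>
        sub_nonneg.mpr (s5_f_mono n k hn hpq.le hη))) (hq.sub hp)]
    have hsub : Iio (0:ℝ) ⊆
        Function.support (fun η => s5f n k q η - s5f n k p η) ∩ Iio 0 :=
      fun η hη => ⟨ne_of_gt (sub_pos.mpr (s5_f_strict n k hn hpq hη)), hη⟩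
    calc (0:ℝ≥0∞) < volume (Iio (0:ℝ)) := by
          rw [Real.volume_Iio]; exact ENNReal.zero_lt_top
      _ ≤ _ := measure_mono hsub
  rw [integral_sub hq hp] at hdiff
  unfold s5F
  linarith

lemma s5_F_cont : Continuous (s5F n k) := by
  rw [continuous_iff_continuousAt]
  intro p₀
  refine continuousAt_of_dominated (bound := fun η => min 1 (s5C n k (p₀+1) * Real.exp η))
    (Eventually.of_forall fun p => (s5_meas n k p).aestronglyMeasurable)
    (((eventually_le_nhds (lt_add_one p₀)).mono fun p hp =>
      (ae_restrict_iff' measurableSet_Iio).mpr (ae_of_all _ fun η hη => by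
        rw [Real.norm_eq_abs, abs_of_pos (s5_f_pos n k hn hη)]
        exact s5_dom n k hn hp hη)))
    (s5_dom_int n k (p₀+1)) ?_
  refine (ae_restrict_iff' measurableSet_Iio).mpr (ae_of_all _ fun η hη => ?_)
  unfold s5f
  have hb : ContinuousAt
      (fun p => 1 + Real.exp (-2 * η - 2 * p) * (1 - Real.exp ((n : ℝ) * η)) ^ ((1 : ℝ) / k))
      p₀ := by fun_prop
  exact hb.rpow_const (Or.inl (ne_of_gt (lt_of_lt_of_le one_pos (s5_base_ge_one n k hn hη))))

lemma s5_F_atBot : Tendsto (s5F n k) atBot (𝓝 0) := by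
  have h0 : (0:ℝ) = ∫ _η in Iio (0:ℝ), (0:ℝ) := by simp
  rw [h0]
  refine tendsto_integral_filter_of_dominated_convergence
    (bound := fun η => min 1 (s5C n k 0 * Real.exp η))
    (Eventually.of_forall fun p => (s5_meas n k p).aestronglyMeasurable)
    (((eventually_le_atBot (0:ℝ)).mono fun p hp =>
      (ae_restrict_iff' measurableSet_Iio).mpr (ae_of_all _ fun η hη => by
        rw [Real.norm_eq_abs, abs_of_pos (s5_f_pos n k hn hη)]
        exact s5_dom n k hn hp hη)))
    (s5_dom_int n k 0) ?_
  refine (ae_restrict_iff' measurableSet_Iio).mpr (ae_of_all _ fun η hη => ?_)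
  have hg := s5_g_pos n k hn hη
  have h1 : Tendsto (fun p : ℝ => -2 * η - 2 * p) atBot atTop := by
    have h2 : Tendsto (fun p : ℝ => 2 * (-p) + (-2 * η)) atBot atTop :=
      tendsto_atTop_add_const_right _ _ ((tendsto_neg_atBot_atTop).const_mul_atTop two_pos)
    refine h2.congr fun p => by ring
  have h3 : Tendsto
      (fun p => 1 + Real.exp (-2 * η - 2 * p) * (1 - Real.exp ((n : ℝ) * η)) ^ ((1 : ℝ) / k))
      atBot atTop :=
    tendsto_atTop_add_const_left _ _
      (((Real.tendsto_exp_atTop.comp h1)).atTop_mul_const hg)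
  have h4 := (tendsto_rpow_neg_atTop (y := (1:ℝ)/2) (by norm_num)).comp h3
  have h5 : -((1:ℝ)/2) = -(1:ℝ)/2 := by norm_num
  unfold s5f
  rw [← h5]
  exact h4

lemma s5_lower {M : ℝ} (hM : 0 < M) (p : ℝ) :
    (1 + Real.exp (2 * M - 2 * p)) ^ (-(1:ℝ)/2) * M ≤ s5F n k p := by
  have key : ∀ η ∈ Ioo (-M) (0:ℝ),
      (1 + Real.exp (2 * M - 2 * p)) ^ (-(1:ℝ)/2) ≤ s5f n k p η := by
    intro η hη
    unfold s5f
    refine Real.rpow_le_rpow_of_nonpos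
      (lt_of_lt_of_le one_pos (s5_base_ge_one n k hn hη.2)) ?_ (by norm_num)
    have h1 : Real.exp (-2 * η - 2 * p) ≤ Real.exp (2 * M - 2 * p) :=
      Real.exp_le_exp.mpr (by nlinarith [hη.1])
    have h2 := s5_g_le_one n k hn hη.2
    have h3 := s5_g_pos n k hn hη.2
    nlinarith [Real.exp_pos (-2 * η - 2 * p)]
  have h1 : (1 + Real.exp (2 * M - 2 * p)) ^ (-(1:ℝ)/2) * (volume (Ioo (-M) (0:ℝ))).toReal
      ≤ ∫ η in Ioo (-M) (0:ℝ), s5f n k p η :=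
    setIntegral_ge_of_const_le_real measurableSet_Ioo (by simp) key
      ((s5_int n k hn p).mono_set (fun η hη => hη.2))
  have hvol : (volume (Ioo (-M) (0:ℝ))).toReal = M := by
    rw [Real.volume_Ioo]
    simp [ENNReal.toReal_ofReal hM.le]
  rw [hvol] at h1
  refine le_trans h1 ?_
  exact setIntegral_mono_set (s5_int n k hn p)
    ((ae_restrict_iff' measurableSet_Iio).mpr (ae_of_all _ fun η hη =>
      (s5_f_pos n k hn hη).le))
    (HasSubset.Subset.eventuallyLE fun η hη => hη.2)

end

end Stmt5Aux

open Filter Set Topology in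
/-- for `n ≥ 3`, `2 ≤ k ≤ n` and every `T > 0`, there exists a unique `p ∈ ℝ` with
`∫_{−∞}^{0} {1 + e^{−2η − 2p}[1 − e^{nη}]^{1/k}}^{−1/2} dη = T`. -/
theorem stmt5 (n k : ℕ) (hn : 3 ≤ n) (hk2 : 2 ≤ k) (hkn : k ≤ n) (T : ℝ) (hT : 0 < T) :
    ∃! p : ℝ,
      (∫ η in Set.Iio (0 : ℝ),
        (1 + Real.exp (-2 * η - 2 * p) * (1 - Real.exp ((n : ℝ) * η)) ^ ((1 : ℝ) / k))
          ^ (-(1 : ℝ) / 2)) = T := by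
  have hn0 : 0 < n := by omega
  have hmono := s5_F_strictMono n k hn0
  have hcont := s5_F_cont n k hn0
  obtain ⟨a, ha⟩ := ((s5_F_atBot n k hn0).eventually_lt_const hT).exists
  set M := T + 1 with hM
  have hMpos : 0 < M := by linarith
  have hLlim : Tendsto (fun p => (1 + Real.exp (2*M-2*p)) ^ (-(1:ℝ)/2) * M) atTop (𝓝 M) := by
    have h1 : Tendsto (fun p : ℝ => 2*M - 2*p) atTop atBot := by
      have h2 : Tendsto (fun p : ℝ => 2 * (-p) + 2*M) atTop atBot :=
        tendsto_atBot_add_const_right _ _ ((tendsto_neg_atTop_atBot).const_mul_atBot two_pos)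
      exact h2.congr fun p => by ring
    have h2 : Tendsto (fun p => Real.exp (2*M-2*p)) atTop (𝓝 0) :=
      Real.tendsto_exp_atBot.comp h1
    have h3 : Tendsto (fun p => 1 + Real.exp (2*M-2*p)) atTop (𝓝 1) := by
      simpa using tendsto_const_nhds.add h2
    have hc : ContinuousAt (fun x : ℝ => x ^ (-(1:ℝ)/2)) 1 :=
      continuousAt_id.rpow_const (Or.inl one_ne_zero)
    have h4 := (hc.tendsto.comp h3).mul_const M
    simpa [Real.one_rpow] using h4
  obtain ⟨b, hb⟩ := (hLlim.eventually_const_lt (by linarith : T < M)).exists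
  have hFb : T < s5F n k b := lt_of_lt_of_le hb (s5_lower n k hn0 hMpos b)
  set a' := min a (b-1) with ha'def
  have ha' : s5F n k a' < T := lt_of_le_of_lt (hmono.monotone (min_le_left _ _)) ha
  have hab : a' ≤ b := le_trans (min_le_right _ _) (by linarith)
  obtain ⟨p, _, hp⟩ := intermediate_value_Icc hab hcont.continuousOn ⟨ha'.le, hFb.le⟩
  exact ⟨p, hp, fun q hq => hmono.injective (hq.trans hp.symm)⟩
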